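/- Let S be a semigroup satisfying the identity x·y·z·x·y = x·y for all x, y, z ∈ S, and suppose that for all x, y, z ∈ S, x·y·y = x·y or z·z·x = z·x. Then for all x, y, z, u, w ∈ S, x·y·y = x·y or z·x·u·w = z·z·u·w. -/
import Mathlib


theorem stmt_10 {S : Type*} [Semigroup S]
    (hGRB : ∀ x y z : S, x * y * z * x * y = x * y)
    (h2 : ∀ x y z : S, x * y * y = x * y ∨ z * z * x = z * x) :
    ∀ x y z u w : S, x * y * y = x * y ∨ z * x * u * w = z * z * u * w := by
  intro x y z u w
  rcases h2 x y z with h | h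
  · exact Or.inl h
  · right
    -- h : z * z * x = z * x
    have huw : u * w * (z * z) * (u * w) = u * w := by
      simpa [mul_assoc] using hGRB u w (z * z)
    have step3 : z * x * (u * w) * (z * z) = z * z := by
      rw [← h]
      simpa [mul_assoc] using hGRB z z (x * (u * w))
    calc z * x * u * w
        = z * x * (u * w * (z * z) * (u * w)) := by rw [huw, ← mul_assoc]
      _ = z * x * (u * w) * (z * z) * (u * w) := by simp [mul_assoc]
      _ = z * z * (u * w) := by rw [step3]
      _ = z * z * u * w := (mul_assoc _ _ _).symm
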